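/- For the flux f(s,c) = s(4−s)/(1+c), a(c) = c, and Riemann data (s_L,c_L) = (2.5, 0.5), (s_R,c_R) = (1, 0) (Case 2a), the piecewise function s(x,t) consisting of the rarefaction fan s = (4 − 1.5·(x−0.5)/t)/2 between speeds σ₁ = f_s(s_L,c_L) = −2/3 and σ_c, the constant state s̄ between σ_c and σ₂, and the outer constant states, together with c jumping from 0.5 to 0 at speed σ_c, satisfies the Rankine–Hugoniot conditions at each discontinuity, where σ_c = f(s*,c_L)/(s* + ā_L(c_R)) = f(s̄,c_R)/(s̄ + ā_L(c_R)) with f_s(s*,c_L) = σ_c, and σ₂ = (f(s̄,c_R) − f(s_R,c_R))/(s̄ − s_R). -/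

import Mathlib

/-- For `f(s,c) = s(4−s)/(1+c)`, `a(c) = c` and Riemann data
`(s_L,c_L) = (2.5, 0.5)`, `(s_R,c_R) = (1,0)` (Case 2a), with
`s* = √5 − 1`, `σ_c = f(s*,c_L)/(s*+1)` and `s̄` the intersection state,
the Rankine–Hugoniot conditions hold at the `c`-discontinuity and at the
`s`-discontinuity, and `f_s(s*,c_L) = σ_c`. -/
theorem riemann_case2a_rankine_hugoniot
    (f : ℝ → ℝ → ℝ) (hf : ∀ s c, f s c = s * (4 - s) / (1 + c))
    (a : ℝ → ℝ) (ha : ∀ c, a c = c)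
    (sL cL sR cR sStar sbar σc σ₂ : ℝ)
    (hsL : sL = 2.5) (hcL : cL = 0.5) (hsR : sR = 1) (hcR : cR = 0)
    (hsStar : sStar = Real.sqrt 5 - 1)
    (hσc : σc = f sStar cL / (sStar + 1))
    (hsbar : f sbar cR = σc * (sbar + 1))
    (hsbar' : sbar ≠ sStar ∧ sbar ≠ sR)
    (hσ₂ : σ₂ = (f sbar cR - f sR cR) / (sbar - sR)) :
    -- Rankine–Hugoniot at the c-discontinuity between (s*,c_L) and (s̄,c_R):
    (f sbar cR - f sStar cL = σc * (sbar - sStar) ∧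
     cR * f sbar cR - cL * f sStar cL
       = σc * (sbar * cR + a cR - sStar * cL - a cL)) ∧
    -- Rankine–Hugoniot at the s-discontinuity between (s̄,c_R) and (s_R,c_R):
    (f sR cR - f sbar cR = σ₂ * (sR - sbar)) ∧
    -- the characteristic speed at s* matches σ_c:
    HasDerivAt (fun s => f s cL) σc sStar := by
  have h5 : Real.sqrt 5 * Real.sqrt 5 = 5 := Real.mul_self_sqrt (by norm_num)
  have hpos : (0:ℝ) < Real.sqrt 5 := Real.sqrt_pos.mpr (by norm_num)
  have hstar1 : sStar + 1 = Real.sqrt 5 := by rw [hsStar]; ring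
  have hne : sStar + 1 ≠ 0 := by rw [hstar1]; exact ne_of_gt hpos
  have hfstar : f sStar cL = σc * (sStar + 1) := by
    rw [hσc]; field_simp
  have hbne : sbar - sR ≠ 0 := sub_ne_zero.mpr hsbar'.2
  refine ⟨⟨?_, ?_⟩, ?_, ?_⟩
  · rw [hsbar, hfstar]; ring
  · rw [hsbar, hfstar, ha, ha, hcR, hcL]; ring
  · rw [hσ₂]; field_simp; ring
  · have hD : HasDerivAt (fun s => f s cL) ((4 - 2 * sStar) / (1 + cL)) sStar := by
      have : (fun s => f s cL) = fun s => s * (4 - s) / (1 + cL) :=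
        funext fun s => hf s cL
      rw [this]
      have h := (((hasDerivAt_id sStar).mul
        ((hasDerivAt_const sStar (4:ℝ)).sub (hasDerivAt_id sStar))).div_const (1 + cL))
      refine h.congr_deriv ?_
      simp; ring
    have : (4 - 2 * sStar) / (1 + cL) = σc := by
      rw [hσc, hf, hcL]
      rw [div_div, div_eq_div_iff (by norm_num) (by rw [hcL] at *; positivity)]
      have h2 : sStar * sStar + 2 * sStar = 4 := by
        have := h5; nlinarith [hstar1]
      nlinarith [h2]
    rwa [this] at hD
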